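/- For a uniformly random permutation w of {1,...,2n}, the labeled Dyck path pair (p_A(w), ℓ(w)) and the labeled Dyck path pair (p_B(w), m(w)) arising from the crossout correspondence are independent random variables. -/

import Mathlib

open Finset

/-- `D ⊆ {1,…,L}` is the set of down steps of a Dyck path of length `L`:
it has `L/2` elements and every prefix has at least as many up steps as down steps. -/
def IsDyck (L : ℕ) (D : Finset ℕ) : Prop :=
  D ⊆ Finset.Icc 1 L ∧ 2 * D.card = L ∧ ∀ k ≤ L, 2 * (D.filter (· ≤ k)).card ≤ k

instance (L : ℕ) : DecidablePred (IsDyck L) := fun D => by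
  unfold IsDyck; infer_instance

/-- The collection of all Dyck paths (encoded by their down-step sets) of length `L`. -/
def dyckPaths (L : ℕ) : Finset (Finset ℕ) :=
  (Finset.Icc 1 L).powerset.filter (IsDyck L)

/-- The position (in `{1,…,L}`) of the `i`-th down step (`1`-indexed). -/
def dstep (D : Finset ℕ) (i : ℕ) : ℕ := (D.sort (· ≤ ·)).getD (i - 1) 0

/-- The height `h_i` of the `i`-th down step of a Dyck path:  the step goes from
`(d_i - 1, h_i)` to `(d_i, h_i - 1)`; equivalently `h_i = d_i + 1 - 2 i`. -/
def ht (D : Finset ℕ) (i : ℕ) : ℕ := dstep D i + 1 - 2 * i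

/-- The modified height `h_i^*`: equal to `h_i - 1` if there is no up step to the right of
the `i`-th down step, and to `h_i` otherwise. -/
def hstar (L : ℕ) (D : Finset ℕ) (i : ℕ) : ℕ :=
  if Finset.Ioc (dstep D i) L ⊆ D then ht D i - 1 else ht D i

/-- `crossout w k` is the pair (positions marked A, positions marked B) after `k` rounds of
the crossout procedure: in each round, first mark B at the unmarked position with the smallest
value `w i`, then mark A at the leftmost unmarked position. -/
def crossout {N : ℕ} (w : Equiv.Perm (Fin N)) : ℕ → Finset (Fin N) × Finset (Fin N)
  | 0 => (∅, ∅)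
  | k + 1 =>
    let p := crossout w k
    let u := (Finset.univ : Finset (Fin N)) \ (p.1 ∪ p.2)
    if hu : u.Nonempty then
      let b := w.symm ((u.image w).min' (hu.image _))
      if ha : (u.erase b).Nonempty then
        (insert ((u.erase b).min' ha) p.1, insert b p.2)
      else (p.1, insert b p.2)
    else p

/-- The set of positions marked A under the crossout procedure. -/
def markA {N : ℕ} (w : Equiv.Perm (Fin N)) : Finset (Fin N) := (crossout w N).1

/-- The set of positions marked B under the crossout procedure. -/
def markB {N : ℕ} (w : Equiv.Perm (Fin N)) : Finset (Fin N) := (crossout w N).2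

/-- Down-step set of Alice's path `p_A(w)`:  the values (in `{1,…,N}`) at positions marked A. -/
def pAset {N : ℕ} (w : Equiv.Perm (Fin N)) : Finset ℕ :=
  (markA w).image (fun a => Fin.val (w a) + 1)

/-- Down-step set of Bob's path `p_B(w)`:  `{b + 1 : b marked B} ∪ {N + 2}`
(positions taken in `{1,…,N}`, so `b + 1` becomes `(b : ℕ) + 2`). -/
def pBset {N : ℕ} (w : Equiv.Perm (Fin N)) : Finset ℕ :=
  insert (N + 2) ((markB w).image (fun b => Fin.val b + 2))

/-- Number of AA inversions of `w`. -/
def aaInv {N : ℕ} (w : Equiv.Perm (Fin N)) : ℕ :=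
  (Finset.univ.filter (fun p : Fin N × Fin N =>
    p.1 < p.2 ∧ w p.2 < w p.1 ∧ p.1 ∈ markA w ∧ p.2 ∈ markA w)).card

/-- Number of BB inversions of `w`. -/
def bbInv {N : ℕ} (w : Equiv.Perm (Fin N)) : ℕ :=
  (Finset.univ.filter (fun p : Fin N × Fin N =>
    p.1 < p.2 ∧ w p.2 < w p.1 ∧ p.1 ∈ markB w ∧ p.2 ∈ markB w)).card

/-- Number of AB inversions of `w`. -/
def abInv {N : ℕ} (w : Equiv.Perm (Fin N)) : ℕ :=
  (Finset.univ.filter (fun p : Fin N × Fin N =>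
    p.1 < p.2 ∧ w p.2 < w p.1 ∧ p.1 ∈ markA w ∧ p.2 ∈ markB w)).card

/-- Total number of inversions of `w`. -/
def invW {N : ℕ} (w : Equiv.Perm (Fin N)) : ℕ :=
  (Finset.univ.filter (fun p : Fin N × Fin N => p.1 < p.2 ∧ w p.2 < w p.1)).card

/-- The statistic `z(w) = #{i < j : w i < w j and i is marked B}`. -/
def zstat {N : ℕ} (w : Equiv.Perm (Fin N)) : ℕ :=
  (Finset.univ.filter (fun p : Fin N × Fin N =>
    p.1 < p.2 ∧ w p.1 < w p.2 ∧ p.1 ∈ markB w)).card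

/-- Label carried by the down step of `p_A` corresponding to the A-position `a`:
one plus the number of A-positions to the left of `a` with larger value. -/
def labelA {N : ℕ} (w : Equiv.Perm (Fin N)) (a : Fin N) : ℕ :=
  1 + ((markA w).filter (fun a' => a' < a ∧ w a < w a')).card

/-- The label sequence `ℓ` of `p_A(w)`: `ellSeq w r` is the label on the `r`-th down step. -/
def ellSeq {N : ℕ} (w : Equiv.Perm (Fin N)) (r : ℕ) : ℕ :=
  ∑ a ∈ (markA w).filter (fun a => Fin.val (w a) + 1 = dstep (pAset w) r), labelA w a

/-- Label carried by the down step of `p_B` corresponding to the B-position `b`: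
one plus the number of B-positions to the right of `b` with smaller value. -/
def labelB {N : ℕ} (w : Equiv.Perm (Fin N)) (b : Fin N) : ℕ :=
  1 + ((markB w).filter (fun b' => w b' < w b ∧ b < b')).card

/-- The label sequence `m` of `p_B(w)`: `emSeq w r` is the label on the `r`-th down step. -/
def emSeq {N : ℕ} (w : Equiv.Perm (Fin N)) (r : ℕ) : ℕ :=
  ∑ b ∈ (markB w).filter (fun b => Fin.val b + 2 = dstep (pBset w) r), labelB w b

/-- The `q`-integer `[k]_q = 1 + q + ⋯ + q^{k-1}` in `ℤ[q]`. -/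
noncomputable def qint (k : ℕ) : Polynomial ℤ := ∑ j ∈ Finset.range k, Polynomial.X ^ j

/-- The `q`-integer `[k]` in the variable `X v` of the two-variable polynomial ring. -/
noncomputable def qint2 (v : Fin 2) (k : ℕ) : MvPolynomial (Fin 2) ℤ :=
  ∑ j ∈ Finset.range k, (MvPolynomial.X v) ^ j

/-- `M` is a perfect matching of `{1,…,2n}`: a family of pairwise disjoint 2-element sets
whose union is `{1,…,2n}`. -/
def IsMatching (n : ℕ) (M : Finset (Finset ℕ)) : Prop :=
  (∀ e ∈ M, e.card = 2) ∧ (M : Set (Finset ℕ)).PairwiseDisjoint id ∧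
    M.biUnion id = Finset.Icc 1 (2 * n)

section Basic
variable {N : ℕ} (w : Equiv.Perm (Fin N))

/-- unmarked set after k rounds -/
def unmk (k : ℕ) : Finset (Fin N) :=
  (Finset.univ : Finset (Fin N)) \ ((crossout w k).1 ∪ (crossout w k).2)

lemma crossout_succ (k : ℕ) :
    crossout w (k + 1) =
    if hu : (unmk w k).Nonempty then
      let b := w.symm (((unmk w k).image w).min' (hu.image _))
      if ha : ((unmk w k).erase b).Nonempty then
        (insert (((unmk w k).erase b).min' ha) (crossout w k).1,
         insert b (crossout w k).2)
      else ((crossout w k).1, insert b (crossout w k).2)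
    else crossout w k := rfl

lemma crossout_mono_succ (k : ℕ) :
    (crossout w k).1 ⊆ (crossout w (k+1)).1 ∧ (crossout w k).2 ⊆ (crossout w (k+1)).2 := by
  rw [crossout_succ]
  split_ifs with hu
  · dsimp only
    split_ifs with ha
    · exact ⟨subset_insert _ _, subset_insert _ _⟩
    · exact ⟨subset_rfl, subset_insert _ _⟩
  · exact ⟨subset_rfl, subset_rfl⟩

lemma crossout_mono {k j : ℕ} (h : k ≤ j) :
    (crossout w k).1 ⊆ (crossout w j).1 ∧ (crossout w k).2 ⊆ (crossout w j).2 := by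
  induction j with
  | zero =>
    have : k = 0 := Nat.le_zero.mp h
    subst this; exact ⟨subset_rfl, subset_rfl⟩
  | succ j ih =>
    rcases Nat.eq_or_lt_of_le h with rfl | h'
    · exact ⟨subset_rfl, subset_rfl⟩
    · have := ih (Nat.lt_succ_iff.mp h')
      exact ⟨this.1.trans (crossout_mono_succ w j).1, this.2.trans (crossout_mono_succ w j).2⟩

lemma crossout_stab {k j : ℕ} (h : k ≤ j) (he : unmk w k = ∅) :
    crossout w j = crossout w k := by
  induction j with
  | zero => have : k = 0 := Nat.le_zero.mp h; rw [this]
  | succ j ih =>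
    rcases Nat.eq_or_lt_of_le h with rfl | h'
    · rfl
    · have hj := ih (Nat.lt_succ_iff.mp h')
      rw [crossout_succ]
      have : unmk w j = ∅ := by rw [unmk, hj, ← unmk, he]
      rw [this]
      simp [hj]

end Basic

section Basic2
variable {N : ℕ} (w : Equiv.Perm (Fin N))

lemma bsel_mem {k : ℕ} (hu : (unmk w k).Nonempty) :
    w.symm (((unmk w k).image w).min' (hu.image _)) ∈ unmk w k := by
  have hm := Finset.min'_mem ((unmk w k).image w) (hu.image _)
  obtain ⟨i, hi, hwi⟩ := Finset.mem_image.mp hm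
  rw [← hwi, Equiv.symm_apply_apply]
  exact hi

lemma bsel_min {k : ℕ} (hu : (unmk w k).Nonempty) {i : Fin N} (hi : i ∈ unmk w k)
    (hne : i ≠ w.symm (((unmk w k).image w).min' (hu.image _))) :
    w (w.symm (((unmk w k).image w).min' (hu.image _))) < w i := by
  rw [Equiv.apply_symm_apply]
  have hle := Finset.min'_le ((unmk w k).image w) (w i) (Finset.mem_image_of_mem w hi)
  rcases lt_or_eq_of_le hle with h | h
  · exact h
  · exfalso; apply hne
    rw [h, Equiv.symm_apply_apply]

end Basic2

section Even
variable {n : ℕ} (w : Equiv.Perm (Fin (2*n)))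

lemma inv1 (k : ℕ) :
    Disjoint (crossout w k).1 (crossout w k).2 ∧
    (crossout w k).1.card = min k n ∧ (crossout w k).2.card = min k n := by
  induction k with
  | zero => simp [crossout]
  | succ k ih =>
    obtain ⟨hd, h1, h2⟩ := ih
    have hucard : (unmk w k).card = 2 * n - 2 * min k n := by
      rw [unmk, Finset.card_sdiff_of_subset (Finset.subset_univ _),
        Finset.card_union_of_disjoint hd, h1, h2, Finset.card_univ, Fintype.card_fin]
      omega
    by_cases hu : (unmk w k).Nonempty
    · have hpos := Finset.card_pos.mpr hu
      have hkn : k < n := by omega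
      have hmin : min k n = k := min_eq_left hkn.le
      set b := w.symm (((unmk w k).image w).min' (hu.image _)) with hb
      have hbu : b ∈ unmk w k := bsel_mem w hu
      have ha : ((unmk w k).erase b).Nonempty := by
        rw [← Finset.card_pos, Finset.card_erase_of_mem hbu]
        omega
      set a := ((unmk w k).erase b).min' ha with haa
      have hau : a ∈ (unmk w k).erase b := Finset.min'_mem _ _
      have hab : a ≠ b := Finset.ne_of_mem_erase hau
      have hau' : a ∈ unmk w k := Finset.mem_of_mem_erase hau
      have hco : crossout w (k+1) = (insert a (crossout w k).1, insert b (crossout w k).2) := by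
        rw [crossout_succ, dif_pos hu]
        dsimp only
        rw [dif_pos ha]
      rw [hco]
      have hanm : a ∉ (crossout w k).1 ∪ (crossout w k).2 := by
        rw [unmk, Finset.mem_sdiff] at hau'; exact hau'.2
      have hbnm : b ∉ (crossout w k).1 ∪ (crossout w k).2 := by
        rw [unmk, Finset.mem_sdiff] at hbu; exact hbu.2
      simp only [Finset.mem_union, not_or] at hanm hbnm
      constructor
      · rw [Finset.disjoint_insert_left]
        constructor
        · simp only [Finset.mem_insert, not_or]
          exact ⟨hab, hanm.2⟩
        · rw [Finset.disjoint_insert_right]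
          exact ⟨hbnm.1, hd⟩
      · rw [Finset.card_insert_of_notMem hanm.1, Finset.card_insert_of_notMem hbnm.2,
          h1, h2]
        omega
    · rw [crossout_succ, dif_neg hu]
      have hc0 : (unmk w k).card = 0 :=
        Finset.card_eq_zero.mpr (Finset.not_nonempty_iff_eq_empty.mp hu)
      have hkn : n ≤ k := by omega
      refine ⟨hd, ?_, ?_⟩ <;> rw [min_eq_right hkn, min_eq_right (by omega)] at * <;> omega

lemma unmk_card (k : ℕ) : (unmk w k).card = 2 * n - 2 * min k n := by
  obtain ⟨hd, h1, h2⟩ := inv1 w k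
  rw [unmk, Finset.card_sdiff_of_subset (Finset.subset_univ _),
    Finset.card_union_of_disjoint hd, h1, h2, Finset.card_univ, Fintype.card_fin]
  omega

lemma unmk_empty (k : ℕ) (h : n ≤ k) : unmk w k = ∅ := by
  rw [← Finset.card_eq_zero, unmk_card, min_eq_right h]
  omega

lemma crossout_of_ge {k : ℕ} (h : n ≤ k) : crossout w k = crossout w n :=
  crossout_stab w h (unmk_empty w n le_rfl)

lemma markA_eq : markA w = (crossout w n).1 := by
  rw [markA, crossout_of_ge w (by omega)]

lemma markB_eq : markB w = (crossout w n).2 := by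
  rw [markB, crossout_of_ge w (by omega)]

lemma crossout_subset_markA (k : ℕ) : (crossout w k).1 ⊆ markA w := by
  rcases le_or_gt k n with h | h
  · rw [markA_eq]; exact (crossout_mono w h).1
  · rw [markA_eq, crossout_of_ge w h.le]

lemma crossout_subset_markB (k : ℕ) : (crossout w k).2 ⊆ markB w := by
  rcases le_or_gt k n with h | h
  · rw [markB_eq]; exact (crossout_mono w h).2
  · rw [markB_eq, crossout_of_ge w h.le]

lemma markA_card : (markA w).card = n := by
  rw [markA, (inv1 w (2*n)).2.1, min_eq_right (by omega)]

lemma markB_card : (markB w).card = n := by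
  rw [markB, (inv1 w (2*n)).2.2, min_eq_right (by omega)]

lemma markAB_disjoint : Disjoint (markA w) (markB w) := (inv1 w (2*n)).1

lemma markAB_union : markA w ∪ markB w = Finset.univ := by
  apply Finset.eq_univ_of_card
  rw [Finset.card_union_of_disjoint (markAB_disjoint w), markA_card, markB_card,
    Fintype.card_fin]
  omega

lemma mem_markB_of_not_markA {i : Fin (2*n)} (h : i ∉ markA w) : i ∈ markB w := by
  have := markAB_union w
  have hi : i ∈ markA w ∪ markB w := by rw [this]; exact Finset.mem_univ i
  rcases Finset.mem_union.mp hi with h' | h'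
  · exact absurd h' h
  · exact h'

lemma roundlem (k : ℕ) (hk : k < n) : ∃ a b : Fin (2*n),
    a ∈ markA w ∧ b ∈ markB w ∧ a ∈ unmk w k ∧ b ∈ unmk w k ∧ a ≠ b ∧
    crossout w (k+1) = (insert a (crossout w k).1, insert b (crossout w k).2) ∧
    (∀ i ∈ unmk w k, i ≠ b → w b < w i) ∧
    (∀ i ∈ unmk w k, i ≠ b → a ≤ i) := by
  have hu : (unmk w k).Nonempty := by
    rw [← Finset.card_pos, unmk_card, min_eq_left hk.le]
    omega
  set b := w.symm (((unmk w k).image w).min' (hu.image _)) with hb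
  have hbu : b ∈ unmk w k := bsel_mem w hu
  have ha : ((unmk w k).erase b).Nonempty := by
    rw [← Finset.card_pos, Finset.card_erase_of_mem hbu, unmk_card, min_eq_left hk.le]
    omega
  set a := ((unmk w k).erase b).min' ha with haa
  have hau : a ∈ (unmk w k).erase b := Finset.min'_mem _ _
  have hco : crossout w (k+1) = (insert a (crossout w k).1, insert b (crossout w k).2) := by
    rw [crossout_succ, dif_pos hu]
    dsimp only
    rw [dif_pos ha]
  refine ⟨a, b, ?_, ?_, Finset.mem_of_mem_erase hau, hbu, Finset.ne_of_mem_erase hau, hco, ?_, ?_⟩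
  · apply crossout_subset_markA w (k+1)
    rw [hco]
    exact Finset.mem_insert_self _ _
  · apply crossout_subset_markB w (k+1)
    rw [hco]
    exact Finset.mem_insert_self _ _
  · intro i hi hne
    exact bsel_min w hu hi hne
  · intro i hi hne
    exact Finset.min'_le _ _ (Finset.mem_erase.mpr ⟨hne, hi⟩)

lemma crossout_stall (k : ℕ) (hk : ¬ k < n) : crossout w (k+1) = crossout w k := by
  rw [crossout_of_ge w (by omega), crossout_of_ge w (by omega : n ≤ k)]

lemma mem_unmk {k : ℕ} {i : Fin (2*n)} :
    i ∈ unmk w k ↔ i ∉ (crossout w k).1 ∧ i ∉ (crossout w k).2 := by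
  rw [unmk, Finset.mem_sdiff, Finset.mem_union]
  simp only [Finset.mem_univ, true_and]
  tauto

lemma dcA (k : ℕ) : ∀ a ∈ (crossout w k).1, ∀ a' ∈ markA w, a' < a → a' ∈ (crossout w k).1 := by
  induction k with
  | zero => intro a ha; simp [crossout] at ha
  | succ k ih =>
    by_cases hk : k < n
    · obtain ⟨a₀, b₀, haM, hbM, hau, hbu, hab, hco, hmin, hleft⟩ := roundlem w k hk
      rw [hco]
      intro a ha a' ha' hlt
      simp only [Finset.mem_insert] at ha ⊢
      rcases ha with rfl | ha
      · right
        by_cases h' : a' ∈ unmk w k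
        · exfalso
          have hne : a' ≠ b₀ := fun h => (Finset.disjoint_left.mp (markAB_disjoint w) ha' (h ▸ hbM))
          exact absurd (hleft a' h' hne) (not_le.mpr hlt)
        · rw [mem_unmk] at h'
          push_neg at h'
          by_cases h1 : a' ∈ (crossout w k).1
          · exact h1
          · exfalso
            have h2 := h' h1
            exact Finset.disjoint_left.mp (markAB_disjoint w) ha' (crossout_subset_markB w k h2)
      · exact Or.inr (ih a ha a' ha' hlt)
    · rw [crossout_stall w k hk]
      exact ih

lemma dcB (k : ℕ) : ∀ b ∈ (crossout w k).2, ∀ b' ∈ markB w, w b' < w b → b' ∈ (crossout w k).2 := by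
  induction k with
  | zero => intro b hb; simp [crossout] at hb
  | succ k ih =>
    by_cases hk : k < n
    · obtain ⟨a₀, b₀, haM, hbM, hau, hbu, hab, hco, hmin, hleft⟩ := roundlem w k hk
      rw [hco]
      intro b hb b' hb' hlt
      simp only [Finset.mem_insert] at hb ⊢
      rcases hb with rfl | hb
      · right
        by_cases h' : b' ∈ unmk w k
        · exfalso
          have hne : b' ≠ b := fun h => (lt_irrefl _ (h ▸ hlt))
          exact absurd (hmin b' h' hne) (not_lt.mpr hlt.le)
        · rw [mem_unmk] at h'
          push_neg at h'
          by_cases h1 : b' ∈ (crossout w k).2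
          · exact h1
          · exfalso
            by_cases h2 : b' ∈ (crossout w k).1
            · exact Finset.disjoint_left.mp (markAB_disjoint w)
                (crossout_subset_markA w k h2) hb'
            · exact h1 (h' h2)
      · exact Or.inr (ih b hb b' hb' hlt)
    · rw [crossout_stall w k hk]
      exact ih

/-- rank of an A-position: number of A-positions strictly to its left -/
def rkA (a : Fin (2*n)) : ℕ := ((markA w).filter (· < a)).card

/-- rank of a B-position: number of B-positions with strictly smaller value -/
def rkB (b : Fin (2*n)) : ℕ := ((markB w).filter (fun b' => w b' < w b)).card

lemma mem_crossout1_iff (k : ℕ) {a : Fin (2*n)} (ha : a ∈ markA w) :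
    a ∈ (crossout w k).1 ↔ rkA w a < min k n := by
  obtain ⟨-, h1, -⟩ := inv1 w k
  constructor
  · intro hmem
    have hsub : (markA w).filter (· < a) ⊆ (crossout w k).1.erase a := by
      intro x hx
      simp only [Finset.mem_filter] at hx
      refine Finset.mem_erase.mpr ⟨ne_of_lt hx.2, ?_⟩
      exact dcA w k a hmem x hx.1 hx.2
    calc rkA w a ≤ ((crossout w k).1.erase a).card := Finset.card_le_card hsub
    _ = min k n - 1 := by rw [Finset.card_erase_of_mem hmem, h1]
    _ < min k n := by
        have : 0 < min k n := by
          have : 0 < (crossout w k).1.card := Finset.card_pos.mpr ⟨a, hmem⟩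
          omega
        omega
  · intro hr
    by_contra hmem
    have hsub : (crossout w k).1 ⊆ (markA w).filter (· < a) := by
      intro c hc
      have hcM : c ∈ markA w := crossout_subset_markA w k hc
      refine Finset.mem_filter.mpr ⟨hcM, ?_⟩
      rcases lt_trichotomy c a with h | h | h
      · exact h
      · exact absurd (h ▸ hc) hmem
      · exact absurd (dcA w k c hc a ha h) hmem
    have := Finset.card_le_card hsub
    rw [h1] at this
    rw [rkA] at hr
    omega

lemma mem_crossout2_iff (k : ℕ) {b : Fin (2*n)} (hb : b ∈ markB w) :
    b ∈ (crossout w k).2 ↔ rkB w b < min k n := by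
  obtain ⟨-, -, h2⟩ := inv1 w k
  constructor
  · intro hmem
    have hsub : (markB w).filter (fun b' => w b' < w b) ⊆ (crossout w k).2.erase b := by
      intro x hx
      simp only [Finset.mem_filter] at hx
      refine Finset.mem_erase.mpr ⟨fun h => absurd (h ▸ hx.2) (lt_irrefl _), ?_⟩
      exact dcB w k b hmem x hx.1 hx.2
    calc rkB w b ≤ ((crossout w k).2.erase b).card := Finset.card_le_card hsub
    _ = min k n - 1 := by rw [Finset.card_erase_of_mem hmem, h2]
    _ < min k n := by
        have : 0 < min k n := by
          have : 0 < (crossout w k).2.card := Finset.card_pos.mpr ⟨b, hmem⟩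
          omega
        omega
  · intro hr
    by_contra hmem
    have hsub : (crossout w k).2 ⊆ (markB w).filter (fun b' => w b' < w b) := by
      intro c hc
      have hcM : c ∈ markB w := crossout_subset_markB w k hc
      refine Finset.mem_filter.mpr ⟨hcM, ?_⟩
      rcases lt_trichotomy (w c) (w b) with h | h | h
      · exact h
      · have : c = b := w.injective h
        exact absurd (this ▸ hc) hmem
      · exact absurd (dcB w k c hc b hb h) hmem
    have := Finset.card_le_card hsub
    rw [h2] at this
    rw [rkB] at hr
    omega

lemma round_rkA {k : ℕ} (hk : k < n) {a : Fin (2*n)} (haM : a ∈ markA w)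
    (hau : a ∈ unmk w k) (ha1 : a ∈ (crossout w (k+1)).1) : rkA w a = k := by
  have h1 : rkA w a < min (k+1) n := (mem_crossout1_iff w (k+1) haM).mp ha1
  have h2 : ¬ rkA w a < min k n := by
    intro h
    exact ((mem_unmk w).mp hau).1 ((mem_crossout1_iff w k haM).mpr h)
  omega

lemma round_rkB {k : ℕ} (hk : k < n) {b : Fin (2*n)} (hbM : b ∈ markB w)
    (hbu : b ∈ unmk w k) (hb2 : b ∈ (crossout w (k+1)).2) : rkB w b = k := by
  have h1 : rkB w b < min (k+1) n := (mem_crossout2_iff w (k+1) hbM).mp hb2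
  have h2 : ¬ rkB w b < min k n := by
    intro h
    exact ((mem_unmk w).mp hbu).2 ((mem_crossout2_iff w k hbM).mpr h)
  omega

end Even

section RankIso
variable {α : Type*} [LinearOrder α]

lemma rank_eq (s : Finset α) {m : ℕ} (h : s.card = m) {x : α} (hx : x ∈ s) :
    (s.filter (· < x)).card = (((s.orderIsoOfFin h).symm ⟨x, hx⟩ : Fin m) : ℕ) := by
  set e := s.orderIsoOfFin h with he
  set i := e.symm ⟨x, hx⟩ with hi
  have hex : e i = ⟨x, hx⟩ := e.apply_symm_apply _
  have himg : s.filter (· < x) = (Finset.Iio i).image (fun j => (e j : α)) := by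
    ext y
    simp only [Finset.mem_filter, Finset.mem_image, Finset.mem_Iio]
    constructor
    · rintro ⟨hy, hyx⟩
      refine ⟨e.symm ⟨y, hy⟩, ?_, by rw [e.apply_symm_apply]⟩
      rw [← e.lt_iff_lt, e.apply_symm_apply, hex]
      exact hyx
    · rintro ⟨j, hj, rfl⟩
      refine ⟨(e j).2, ?_⟩
      have := e.lt_iff_lt.mpr hj
      rw [hex] at this
      exact this
  rw [himg, Finset.card_image_of_injective _ (fun a b hab => e.injective (Subtype.ext hab)),
    Fin.card_Iio]

lemma rank_lt_iff (s : Finset α) {m : ℕ} (h : s.card = m) {x y : α} (hx : x ∈ s) (hy : y ∈ s) :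
    (s.filter (· < x)).card < (s.filter (· < y)).card ↔ x < y := by
  rw [rank_eq s h hx, rank_eq s h hy]
  rw [← Fin.lt_iff_val_lt_val, (s.orderIsoOfFin h).symm.lt_iff_lt]
  exact Iff.rfl

end RankIso

section Code
variable {α β : Type*} [LinearOrder α] [LinearOrder β] [DecidableEq α] [DecidableEq β]

lemma image_erase_injOn (s : Finset α) (f : α → β) (hf : Set.InjOn f s) {x0 : α}
    (hx0 : x0 ∈ s) : (s.erase x0).image f = (s.image f).erase (f x0) := by
  ext v
  constructor
  · intro hv
    obtain ⟨z, hz, rfl⟩ := Finset.mem_image.mp hv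
    obtain ⟨hzne, hzs⟩ := Finset.mem_erase.mp hz
    exact Finset.mem_erase.mpr ⟨fun h => hzne (hf hzs hx0 h), Finset.mem_image_of_mem f hzs⟩
  · intro hv
    obtain ⟨hne, hv'⟩ := Finset.mem_erase.mp hv
    obtain ⟨z, hz, rfl⟩ := Finset.mem_image.mp hv'
    exact Finset.mem_image_of_mem f (Finset.mem_erase.mpr ⟨fun h => hne (h ▸ rfl), hz⟩)

lemma pos_eq_of_card_lt_eq (s : Finset α) {x y : α} (hx : x ∈ s) (hy : y ∈ s)
    (h : (s.filter (· < x)).card = (s.filter (· < y)).card) : x = y := by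
  rcases lt_trichotomy x y with hlt | he | hlt
  · exact absurd h (ne_of_lt ((rank_lt_iff s rfl hx hy).mpr hlt))
  · exact he
  · exact absurd h.symm (ne_of_lt ((rank_lt_iff s rfl hy hx).mpr hlt))

/-- Uniqueness of the value-keyed inversion code (counting earlier positions with
larger values). -/
lemma codeA_unique (s : Finset α) (f g : α → β) (hf : Set.InjOn f s) (hg : Set.InjOn g s)
    (himg : s.image f = s.image g)
    (hlab : ∀ x ∈ s, ∀ y ∈ s, f x = g y →
      (s.filter (fun z => z < x ∧ f x < f z)).card =
      (s.filter (fun z => z < y ∧ g y < g z)).card) :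
    ∀ x ∈ s, f x = g x := by
  induction s using Finset.strongInduction with
  | _ s ih =>
  rcases Finset.eq_empty_or_nonempty s with rfl | hs
  · intro x hx; simp at hx
  have hV : (s.image f).Nonempty := hs.image f
  set v0 := (s.image f).min' hV with hv0
  obtain ⟨xf, hxf, hfxf⟩ := Finset.mem_image.mp ((s.image f).min'_mem hV)
  have hv0g : v0 ∈ s.image g := himg ▸ (s.image f).min'_mem hV
  obtain ⟨xg, hxg, hgxg⟩ := Finset.mem_image.mp hv0g
  -- all other f-values exceed v0
  have hfmin : ∀ z ∈ s, z ≠ xf → v0 < f z := by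
    intro z hz hne
    have h1 : v0 ≤ f z := Finset.min'_le _ _ (Finset.mem_image_of_mem f hz)
    rcases lt_or_eq_of_le h1 with h | h
    · exact h
    · refine absurd (hf hz hxf ?_) hne
      rw [← h, hfxf]
  have hgmem : ∀ z ∈ s, g z ∈ s.image f := fun z hz =>
    himg.symm ▸ Finset.mem_image_of_mem g hz
  have hgmin : ∀ z ∈ s, z ≠ xg → v0 < g z := by
    intro z hz hne
    have h1 : v0 ≤ g z := Finset.min'_le _ _ (hgmem z hz)
    rcases lt_or_eq_of_le h1 with h | h
    · exact h
    · refine absurd (hg hz hxg ?_) hne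
      rw [← h, hgxg]
  have hkey := hlab xf hxf xg hxg (by rw [hfxf, hgxg])
  have hfilt1 : s.filter (fun z => z < xf ∧ f xf < f z) = s.filter (· < xf) := by
    apply Finset.filter_congr
    intro z hz
    simp only [and_iff_left_iff_imp]
    intro hzlt
    rw [hfxf]
    exact hfmin z hz (ne_of_lt hzlt)
  have hfilt2 : s.filter (fun z => z < xg ∧ g xg < g z) = s.filter (· < xg) := by
    apply Finset.filter_congr
    intro z hz
    simp only [and_iff_left_iff_imp]
    intro hzlt
    rw [hgxg]
    exact hgmin z hz (ne_of_lt hzlt)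
  rw [hfilt1, hfilt2] at hkey
  have hxeq : xf = xg := pos_eq_of_card_lt_eq s hxf hxg hkey
  subst hxeq
  -- recurse on s.erase xf
  have himg' : (s.erase xf).image f = (s.erase xf).image g := by
    rw [image_erase_injOn s f hf hxf, image_erase_injOn s g hg hxf, himg, hfxf, hgxg]
  have hlab' : ∀ x ∈ s.erase xf, ∀ y ∈ s.erase xf, f x = g y →
      ((s.erase xf).filter (fun z => z < x ∧ f x < f z)).card =
      ((s.erase xf).filter (fun z => z < y ∧ g y < g z)).card := by
    intro x hx y hy hxy
    have hxs := Finset.mem_of_mem_erase hx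
    have hys := Finset.mem_of_mem_erase hy
    have h1 : (s.erase xf).filter (fun z => z < x ∧ f x < f z) =
        s.filter (fun z => z < x ∧ f x < f z) := by
      rw [Finset.filter_erase]
      apply Finset.erase_eq_of_notMem
      simp only [Finset.mem_filter, not_and]
      intro _ _
      rw [hfxf]
      exact not_lt.mpr (Finset.min'_le _ _ (Finset.mem_image_of_mem f hxs))
    have h2 : (s.erase xf).filter (fun z => z < y ∧ g y < g z) =
        s.filter (fun z => z < y ∧ g y < g z) := by
      rw [Finset.filter_erase]
      apply Finset.erase_eq_of_notMem
      simp only [Finset.mem_filter, not_and]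
      intro _ _
      rw [hgxg]
      exact not_lt.mpr (Finset.min'_le _ _ (hgmem y hys))
    rw [h1, h2]
    exact hlab x hxs y hys hxy
  have hrec := ih (s.erase xf) (Finset.erase_ssubset hxf)
    (hf.mono (Finset.coe_subset.mpr (Finset.erase_subset _ _)))
    (hg.mono (Finset.coe_subset.mpr (Finset.erase_subset _ _))) himg' hlab'
  intro x hx
  by_cases hxx : x = xf
  · subst hxx; rw [hfxf, hgxg]
  · exact hrec x (Finset.mem_erase.mpr ⟨hxx, hx⟩)

/-- Uniqueness of the position-keyed inversion code (counting later positions with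
smaller values). -/
lemma codeB_unique (s : Finset α) (f g : α → β) (hf : Set.InjOn f s) (hg : Set.InjOn g s)
    (himg : s.image f = s.image g)
    (hlab : ∀ x ∈ s,
      (s.filter (fun z => f z < f x ∧ x < z)).card =
      (s.filter (fun z => g z < g x ∧ x < z)).card) :
    ∀ x ∈ s, f x = g x := by
  induction s using Finset.strongInduction with
  | _ s ih =>
  rcases Finset.eq_empty_or_nonempty s with rfl | hs
  · intro x hx; simp at hx
  have hV : (s.image f).Nonempty := hs.image f
  set v1 := (s.image f).max' hV with hv1
  obtain ⟨xf, hxf, hfxf⟩ := Finset.mem_image.mp ((s.image f).max'_mem hV)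
  have hv1g : v1 ∈ s.image g := by rw [← himg]; exact (s.image f).max'_mem hV
  obtain ⟨xg, hxg, hgxg⟩ := Finset.mem_image.mp hv1g
  have hgmem : ∀ z ∈ s, g z ∈ s.image f := fun z hz =>
    himg.symm ▸ Finset.mem_image_of_mem g hz
  have hfmax : ∀ z ∈ s, z ≠ xf → f z < v1 := by
    intro z hz hne
    rcases lt_or_eq_of_le (Finset.le_max' _ _ (Finset.mem_image_of_mem f hz)) with h | h
    · exact h
    · refine absurd (hf hz hxf ?_) hne
      rw [h, hfxf]
  have hgmax : ∀ z ∈ s, z ≠ xg → g z < v1 := by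
    intro z hz hne
    rcases lt_or_eq_of_le (Finset.le_max' _ _ (hgmem z hz)) with h | h
    · exact h
    · refine absurd (hg hz hxg ?_) hne
      rw [h, hgxg]
  -- xf = xg
  have hxeq : xf = xg := by
    by_contra hne
    rcases lt_trichotomy xf xg with hlt | heq | hlt
    · -- use code at xf : every later position has smaller g-value; xg later with max g-value
      have hkey := hlab xf hxf
      have hfull : s.filter (fun z => f z < f xf ∧ xf < z) = s.filter (fun z => xf < z) := by
        apply Finset.filter_congr
        intro z hz
        simp only [and_iff_right_iff_imp]
        intro hzlt
        rw [hfxf]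
        exact hfmax z hz (ne_of_gt hzlt)
      rw [hfull] at hkey
      have hsub : s.filter (fun z => g z < g xf ∧ xf < z) ⊆ s.filter (fun z => xf < z) := by
        intro z hz
        rw [Finset.mem_filter] at hz ⊢
        exact ⟨hz.1, hz.2.2⟩
      have heq2 : s.filter (fun z => g z < g xf ∧ xf < z) = s.filter (fun z => xf < z) :=
        Finset.eq_of_subset_of_card_le hsub (le_of_eq hkey)
      have hxg2 : xg ∈ s.filter (fun z => xf < z) := Finset.mem_filter.mpr ⟨hxg, hlt⟩
      rw [← heq2, Finset.mem_filter] at hxg2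
      have : g xg < g xf := hxg2.2.1
      rw [hgxg] at this
      exact absurd this (not_lt.mpr (Finset.le_max' _ _ (hgmem xf hxf)))
    · exact hne heq
    · have hkey := hlab xg hxg
      have hfull : s.filter (fun z => g z < g xg ∧ xg < z) = s.filter (fun z => xg < z) := by
        apply Finset.filter_congr
        intro z hz
        simp only [and_iff_right_iff_imp]
        intro hzlt
        rw [hgxg]
        exact hgmax z hz (ne_of_gt hzlt)
      rw [hfull] at hkey
      have hsub : s.filter (fun z => f z < f xg ∧ xg < z) ⊆ s.filter (fun z => xg < z) := by
        intro z hz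
        rw [Finset.mem_filter] at hz ⊢
        exact ⟨hz.1, hz.2.2⟩
      have heq2 : s.filter (fun z => f z < f xg ∧ xg < z) = s.filter (fun z => xg < z) :=
        Finset.eq_of_subset_of_card_le hsub (ge_of_eq hkey)
      have hxf2 : xf ∈ s.filter (fun z => xg < z) := Finset.mem_filter.mpr ⟨hxf, hlt⟩
      rw [← heq2, Finset.mem_filter] at hxf2
      have : f xf < f xg := hxf2.2.1
      rw [hfxf] at this
      exact absurd this (not_lt.mpr (Finset.le_max' _ _ (Finset.mem_image_of_mem f hxg)))
  subst hxeq
  -- recurse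
  have himg' : (s.erase xf).image f = (s.erase xf).image g := by
    rw [image_erase_injOn s f hf hxf, image_erase_injOn s g hg hxf, himg, hfxf, hgxg]
  have hlab' : ∀ x ∈ s.erase xf,
      ((s.erase xf).filter (fun z => f z < f x ∧ x < z)).card =
      ((s.erase xf).filter (fun z => g z < g x ∧ x < z)).card := by
    intro x hx
    have hxs := Finset.mem_of_mem_erase hx
    have h1 : (s.erase xf).filter (fun z => f z < f x ∧ x < z) =
        s.filter (fun z => f z < f x ∧ x < z) := by
      rw [Finset.filter_erase]
      apply Finset.erase_eq_of_notMem
      simp only [Finset.mem_filter, not_and]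
      intro _ h
      exact absurd (h.trans_le (Finset.le_max' _ _ (Finset.mem_image_of_mem f hxs)))
        (by rw [hfxf]; exact lt_irrefl v1)
    have h2 : (s.erase xf).filter (fun z => g z < g x ∧ x < z) =
        s.filter (fun z => g z < g x ∧ x < z) := by
      rw [Finset.filter_erase]
      apply Finset.erase_eq_of_notMem
      simp only [Finset.mem_filter, not_and]
      intro _ h
      exact absurd (h.trans_le (Finset.le_max' _ _ (hgmem x hxs)))
        (by rw [hgxg]; exact lt_irrefl v1)
    rw [h1, h2]
    exact hlab x hxs
  have hrec := ih (s.erase xf) (Finset.erase_ssubset hxf)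
    (hf.mono (Finset.coe_subset.mpr (Finset.erase_subset _ _)))
    (hg.mono (Finset.coe_subset.mpr (Finset.erase_subset _ _))) himg' hlab'
  intro x hx
  by_cases hxx : x = xf
  · subst hxx; rw [hfxf, hgxg]
  · exact hrec x (Finset.mem_erase.mpr ⟨hxx, hx⟩)

end Code

section Extract

lemma dstep_mem {D : Finset ℕ} {x : ℕ} (hx : x ∈ D) : ∃ r, dstep D r = x := by
  have hx' : x ∈ D.sort (· ≤ ·) := (Finset.mem_sort _).mpr hx
  obtain ⟨i, hi, hget⟩ := List.getElem_of_mem hx'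
  refine ⟨i + 1, ?_⟩
  rw [dstep]
  simp only [Nat.add_sub_cancel]
  rw [List.getD_eq_getElem _ _ hi]
  exact hget

variable {n : ℕ}

lemma ellSeq_spec (w : Equiv.Perm (Fin (2*n))) (r : ℕ) {a0 : Fin (2*n)} (ha0 : a0 ∈ markA w)
    (hd : (w a0).val + 1 = dstep (pAset w) r) : ellSeq w r = labelA w a0 := by
  have hflt : (markA w).filter (fun a => Fin.val (w a) + 1 = dstep (pAset w) r) = {a0} := by
    ext a
    simp only [Finset.mem_filter, Finset.mem_singleton]
    constructor
    · rintro ⟨ha, hval⟩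
      apply w.injective
      apply Fin.ext
      omega
    · rintro rfl
      exact ⟨ha0, hd⟩
  rw [ellSeq, hflt, Finset.sum_singleton]

lemma emSeq_spec (w : Equiv.Perm (Fin (2*n))) (r : ℕ) {b0 : Fin (2*n)} (hb0 : b0 ∈ markB w)
    (hd : (b0 : ℕ) + 2 = dstep (pBset w) r) : emSeq w r = labelB w b0 := by
  have hflt : (markB w).filter (fun b => Fin.val b + 2 = dstep (pBset w) r) = {b0} := by
    ext b
    simp only [Finset.mem_filter, Finset.mem_singleton]
    constructor
    · rintro ⟨hb, hval⟩
      apply Fin.ext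
      omega
    · rintro rfl
      exact ⟨hb0, hd⟩
  rw [emSeq, hflt, Finset.sum_singleton]

lemma markB_of_pBset {w1 w2 : Equiv.Perm (Fin (2*n))} (h : pBset w1 = pBset w2) :
    markB w1 = markB w2 := by
  have himg : ∀ (w : Equiv.Perm (Fin (2*n))), (2*n+2) ∉ (markB w).image (fun b => Fin.val b + 2) := by
    intro w hmem
    obtain ⟨b, _, hb⟩ := Finset.mem_image.mp hmem
    have := b.isLt
    omega
  have h2 : (markB w1).image (fun b => Fin.val b + 2) =
      (markB w2).image (fun b => Fin.val b + 2) := by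
    rw [pBset, pBset] at h
    have := himg w1
    have := himg w2
    ext x
    constructor <;> intro hx
    · have hx1 : x ∈ insert (2*n+2) ((markB w1).image (fun b => Fin.val b + 2)) :=
        Finset.mem_insert_of_mem hx
      rw [h] at hx1
      rcases Finset.mem_insert.mp hx1 with rfl | hx2
      · exact absurd hx (himg w1)
      · exact hx2
    · have hx1 : x ∈ insert (2*n+2) ((markB w2).image (fun b => Fin.val b + 2)) :=
        Finset.mem_insert_of_mem hx
      rw [← h] at hx1
      rcases Finset.mem_insert.mp hx1 with rfl | hx2
      · exact absurd hx (himg w2)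
      · exact hx2
  ext b
  constructor <;> intro hb
  · have : (b : ℕ) + 2 ∈ (markB w2).image (fun b => Fin.val b + 2) := by
      rw [← h2]; exact Finset.mem_image_of_mem _ hb
    obtain ⟨b', hb', hbb⟩ := Finset.mem_image.mp this
    have : b' = b := Fin.ext (by omega)
    exact this ▸ hb'
  · have : (b : ℕ) + 2 ∈ (markB w1).image (fun b => Fin.val b + 2) := by
      rw [h2]; exact Finset.mem_image_of_mem _ hb
    obtain ⟨b', hb', hbb⟩ := Finset.mem_image.mp this
    have : b' = b := Fin.ext (by omega)
    exact this ▸ hb'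

lemma markA_compl (w : Equiv.Perm (Fin (2*n))) {i : Fin (2*n)} :
    i ∈ markA w ↔ i ∉ markB w := by
  constructor
  · intro h
    exact fun h' => Finset.disjoint_left.mp (markAB_disjoint w) h h'
  · intro h
    by_contra h'
    exact h (mem_markB_of_not_markA w h')

lemma valA_of_pAset {w1 w2 : Equiv.Perm (Fin (2*n))} (h : pAset w1 = pAset w2) :
    (markA w1).image (fun a => w1 a) = (markA w2).image (fun a => w2 a) := by
  ext v
  constructor <;> intro hv
  · obtain ⟨a, ha, rfl⟩ := Finset.mem_image.mp hv
    have : (w1 a).val + 1 ∈ pAset w2 := by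
      rw [← h, pAset]
      exact Finset.mem_image_of_mem _ ha
    obtain ⟨a', ha', hval⟩ := Finset.mem_image.mp this
    have : w2 a' = w1 a := Fin.ext (by omega)
    rw [← this]
    exact Finset.mem_image_of_mem _ ha'
  · obtain ⟨a, ha, rfl⟩ := Finset.mem_image.mp hv
    have : (w2 a).val + 1 ∈ pAset w1 := by
      rw [h, pAset]
      exact Finset.mem_image_of_mem _ ha
    obtain ⟨a', ha', hval⟩ := Finset.mem_image.mp this
    have : w1 a' = w2 a := Fin.ext (by omega)
    rw [← this]
    exact Finset.mem_image_of_mem _ ha'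

lemma valB_eq_compl (w : Equiv.Perm (Fin (2*n))) :
    (markB w).image (fun b => w b) = ((markA w).image (fun a => w a))ᶜ := by
  apply Finset.eq_of_subset_of_card_le
  · intro v hv
    obtain ⟨b, hb, rfl⟩ := Finset.mem_image.mp hv
    rw [Finset.mem_compl]
    intro hmem
    obtain ⟨a, ha, hav⟩ := Finset.mem_image.mp hmem
    have : a = b := w.injective hav
    exact Finset.disjoint_left.mp (markAB_disjoint w) (this ▸ ha) hb
  · rw [Finset.card_compl, Finset.card_image_of_injective _ w.injective,
      Finset.card_image_of_injective _ w.injective, markA_card, markB_card,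
      Fintype.card_fin]
    omega

lemma inj_main (w1 w2 : Equiv.Perm (Fin (2*n))) (hA : pAset w1 = pAset w2)
    (hl : ellSeq w1 = ellSeq w2) (hB : pBset w1 = pBset w2) (hm : emSeq w1 = emSeq w2) :
    w1 = w2 := by
  have hmB : markB w1 = markB w2 := markB_of_pBset hB
  have hmA : markA w1 = markA w2 := by
    ext i
    rw [markA_compl, markA_compl, hmB]
  have hVA : (markA w1).image (fun a => w1 a) = (markA w1).image (fun a => w2 a) := by
    rw [valA_of_pAset hA, hmA]
  have hVB : (markB w1).image (fun b => w1 b) = (markB w1).image (fun b => w2 b) := by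
    rw [valB_eq_compl w1, hVA, hmA, ← valB_eq_compl w2, hmB]
  -- equality on markA via codeA_unique
  have heqA : ∀ a ∈ markA w1, w1 a = w2 a := by
    apply codeA_unique (markA w1) (fun a => w1 a) (fun a => w2 a)
      (fun a _ b _ hab => w1.injective hab) (fun a _ b _ hab => w2.injective hab) hVA
    intro x hx y hy hxy
    obtain ⟨r, hr⟩ := dstep_mem (show (w1 x).val + 1 ∈ pAset w1 from
      Finset.mem_image_of_mem _ hx)
    have e1 : ellSeq w1 r = labelA w1 x := ellSeq_spec w1 r hx hr.symm
    have e2 : ellSeq w2 r = labelA w2 y := by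
      apply ellSeq_spec w2 r (hmA ▸ hy)
      rw [← hA, hr, hxy]
    have hthis := e1.symm.trans ((congrFun hl r).trans e2)
    rw [labelA, labelA, ← hmA] at hthis
    exact Nat.add_left_cancel hthis
  have heqB : ∀ b ∈ markB w1, w1 b = w2 b := by
    apply codeB_unique (markB w1) (fun b => w1 b) (fun b => w2 b)
      (fun a _ b _ hab => w1.injective hab) (fun a _ b _ hab => w2.injective hab) hVB
    intro x hx
    obtain ⟨r, hr⟩ := dstep_mem (show (x : ℕ) + 2 ∈ pBset w1 from
      Finset.mem_insert_of_mem (Finset.mem_image_of_mem _ hx))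
    have e1 : emSeq w1 r = labelB w1 x := emSeq_spec w1 r hx hr.symm
    have e2 : emSeq w2 r = labelB w2 x := by
      apply emSeq_spec w2 r (hmB ▸ hx)
      rw [← hB, hr]
    have hthis := e1.symm.trans ((congrFun hm r).trans e2)
    rw [labelB, labelB, ← hmB] at hthis
    exact Nat.add_left_cancel hthis
  apply Equiv.ext
  intro i
  by_cases hi : i ∈ markA w1
  · exact heqA i hi
  · exact heqB i (mem_markB_of_not_markA w1 hi)

end Extract

section Mix
variable {n : ℕ}

/-- helper: filter-image commutation for values -/
lemma filter_image_lt {N : ℕ} (w : Equiv.Perm (Fin N)) (s : Finset (Fin N)) (x : Fin N) :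
    (s.image (fun b => w b)).filter (fun v => v < w x) =
    (s.filter (fun y => w y < w x)).image (fun b => w b) := by
  ext v
  simp only [Finset.mem_filter, Finset.mem_image]
  constructor
  · rintro ⟨⟨y, hy, rfl⟩, hlt⟩
    exact ⟨y, ⟨hy, hlt⟩, rfl⟩
  · rintro ⟨y, ⟨hy1, hy2⟩, rfl⟩
    exact ⟨⟨y, hy1, rfl⟩, hy2⟩

lemma VB_card (w : Equiv.Perm (Fin (2*n))) : ((markB w).image (fun b => w b)).card = n := by
  rw [Finset.card_image_of_injective _ w.injective]; exact markB_card w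

/-- order isomorphism from `Fin n` to the A-positions -/
noncomputable def eA (w : Equiv.Perm (Fin (2*n))) : Fin n ≃o (markA w : Finset (Fin (2*n))) :=
  (markA w).orderIsoOfFin (markA_card w)

/-- order isomorphism from `Fin n` to the B-values -/
noncomputable def eV (w : Equiv.Perm (Fin (2*n))) :
    Fin n ≃o ((markB w).image (fun b => w b) : Finset (Fin (2*n))) :=
  ((markB w).image (fun b => w b)).orderIsoOfFin (VB_card w)

variable (w1 w2 : Equiv.Perm (Fin (2*n)))

/-- the combined permutation: A-positions of `w2` get the A-values of `w1` (matched by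
order of positions), B-positions of `w2` get the B-values of `w1` (matched so that the
relative value order agrees with `w2`). -/
noncomputable def mixFun : Fin (2*n) → Fin (2*n) := fun i =>
  if h : i ∈ markA w2 then (w1 (eA w1 ((eA w2).symm ⟨i, h⟩)) : Fin (2*n))
  else (eV w1 ((eV w2).symm
    ⟨w2 i, Finset.mem_image_of_mem _ (mem_markB_of_not_markA w2 h)⟩) : Fin (2*n))

lemma mixFun_A {i : Fin (2*n)} (h : i ∈ markA w2) :
    mixFun w1 w2 i = (w1 (eA w1 ((eA w2).symm ⟨i, h⟩)) : Fin (2*n)) := dif_pos h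

lemma mixFun_B {i : Fin (2*n)} (h : i ∈ markB w2) :
    mixFun w1 w2 i =
      (eV w1 ((eV w2).symm ⟨w2 i, Finset.mem_image_of_mem _ h⟩) : Fin (2*n)) := by
  have h' : i ∉ markA w2 := fun h'' => Finset.disjoint_left.mp (markAB_disjoint w2) h'' h
  rw [mixFun, dif_neg h']

lemma mixFun_A_mem {i : Fin (2*n)} (h : i ∈ markA w2) :
    mixFun w1 w2 i ∈ (markA w1).image (fun a => w1 a) := by
  rw [mixFun_A w1 w2 h]
  exact Finset.mem_image_of_mem _ (Finset.coe_mem _)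

lemma mixFun_B_mem {i : Fin (2*n)} (h : i ∈ markB w2) :
    mixFun w1 w2 i ∈ (markB w1).image (fun b => w1 b) := by
  rw [mixFun_B w1 w2 h]
  exact Finset.coe_mem _

lemma AB_val_disjoint (w : Equiv.Perm (Fin (2*n))) :
    Disjoint ((markA w).image (fun a => w a)) ((markB w).image (fun b => w b)) := by
  rw [Finset.disjoint_left]
  intro v hvA hvB
  obtain ⟨a, ha, rfl⟩ := Finset.mem_image.mp hvA
  obtain ⟨b, hb, hba⟩ := Finset.mem_image.mp hvB
  have : b = a := w.injective hba
  exact Finset.disjoint_left.mp (markAB_disjoint w) ha (this ▸ hb)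

lemma mixFun_inj : Function.Injective (mixFun w1 w2) := by
  intro i j hij
  by_cases hi : i ∈ markA w2 <;> by_cases hj : j ∈ markA w2
  · rw [mixFun_A w1 w2 hi, mixFun_A w1 w2 hj] at hij
    have h1 := w1.injective hij
    have h2 := (eA w1).injective (Subtype.ext h1)
    have h3 := (eA w2).symm.injective h2
    exact congrArg Subtype.val h3
  · exfalso
    have hjB := mem_markB_of_not_markA w2 hj
    have h1 := mixFun_A_mem w1 w2 hi
    have h2 := mixFun_B_mem w1 w2 hjB
    rw [hij] at h1
    exact Finset.disjoint_left.mp (AB_val_disjoint w1) h1 h2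
  · exfalso
    have hiB := mem_markB_of_not_markA w2 hi
    have h1 := mixFun_B_mem w1 w2 hiB
    have h2 := mixFun_A_mem w1 w2 hj
    rw [hij] at h1
    exact Finset.disjoint_left.mp (AB_val_disjoint w1) h2 h1
  · have hiB := mem_markB_of_not_markA w2 hi
    have hjB := mem_markB_of_not_markA w2 hj
    rw [mixFun_B w1 w2 hiB, mixFun_B w1 w2 hjB] at hij
    have h1 := (eV w1).injective (Subtype.ext hij : _)
    have h2 := (eV w2).symm.injective h1
    have h3 : w2 i = w2 j := congrArg Subtype.val h2
    exact w2.injective h3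

/-- the combined permutation -/
noncomputable def mixPerm : Equiv.Perm (Fin (2*n)) :=
  Equiv.ofBijective _ ((Finite.injective_iff_bijective).mp (mixFun_inj w1 w2))

lemma mixPerm_apply (i : Fin (2*n)) : mixPerm w1 w2 i = mixFun w1 w2 i := rfl

lemma rank_eA (w : Equiv.Perm (Fin (2*n))) {i : Fin (2*n)} (h : i ∈ markA w) :
    ((markA w).filter (· < i)).card = (((eA w).symm ⟨i, h⟩ : Fin n) : ℕ) :=
  rank_eq (markA w) (markA_card w) h

lemma rank_eA' (w : Equiv.Perm (Fin (2*n))) (t : Fin n) :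
    ((markA w).filter (· < (eA w t : Fin (2*n)))).card = (t : ℕ) := by
  rw [rank_eA w (Finset.coe_mem (eA w t))]
  congr 1
  rw [Subtype.coe_eta]
  exact (eA w).symm_apply_apply t

lemma rkB_lt (w : Equiv.Perm (Fin (2*n))) {b : Fin (2*n)} (hb : b ∈ markB w) :
    rkB w b < n := by
  have hss : (markB w).filter (fun b' => w b' < w b) ⊂ markB w := by
    rw [Finset.ssubset_iff_of_subset (Finset.filter_subset _ _)]
    exact ⟨b, hb, fun h => absurd (Finset.mem_filter.mp h).2 (lt_irrefl _)⟩
  have h := Finset.card_lt_card hss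
  rwa [markB_card] at h

lemma rank_eV' (w : Equiv.Perm (Fin (2*n))) {b : Fin (2*n)} (hb : b ∈ markB w) :
    ((eV w).symm ⟨w b, Finset.mem_image_of_mem _ hb⟩ : Fin n) = ⟨rkB w b, rkB_lt w hb⟩ := by
  apply Fin.ext
  show ((((markB w).image (fun b => w b)).orderIsoOfFin (VB_card w)).symm
    ⟨w b, Finset.mem_image_of_mem _ hb⟩ : Fin n).val = rkB w b
  rw [← rank_eq ((markB w).image (fun b => w b)) (VB_card w)
    (Finset.mem_image_of_mem (fun b => w b) hb)]
  have h2 := filter_image_lt w (markB w) b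
  rw [h2, Finset.card_image_of_injective _ w.injective]
  rfl


lemma mix_B_lt {i j : Fin (2*n)} (hi : i ∈ markB w2) (hj : j ∈ markB w2) :
    mixPerm w1 w2 i < mixPerm w1 w2 j ↔ w2 i < w2 j := by
  rw [mixPerm_apply, mixPerm_apply, mixFun_B w1 w2 hi, mixFun_B w1 w2 hj,
    Subtype.coe_lt_coe, (eV w1).lt_iff_lt, (eV w2).symm.lt_iff_lt, Subtype.mk_lt_mk]

lemma mix_crossout : ∀ k, crossout (mixPerm w1 w2) k = crossout w2 k := by
  intro k
  induction k with
  | zero => rfl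
  | succ k ih =>
    by_cases hk : k < n
    · set w := mixPerm w1 w2 with hw
      obtain ⟨a2, b2, ha2M, hb2M, ha2u, hb2u, hab2, hco2, hmin2, hleft2⟩ := roundlem w2 k hk
      obtain ⟨a1, b1, ha1M, hb1M, ha1u, hb1u, hab1, hco1, hmin1, hleft1⟩ := roundlem w1 k hk
      have huEq : unmk w k = unmk w2 k := by rw [unmk, unmk, ih]
      -- the value of w at b2 equals the value of w1 at b1
      have hrk2 : rkB w2 b2 = k := round_rkB w2 hk hb2M hb2u
        (by rw [hco2]; exact Finset.mem_insert_self _ _)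
      have hrk1 : rkB w1 b1 = k := round_rkB w1 hk hb1M hb1u
        (by rw [hco1]; exact Finset.mem_insert_self _ _)
      have hvb : w b2 = w1 b1 := by
        rw [hw, mixPerm_apply, mixFun_B w1 w2 hb2M, rank_eV' w2 hb2M]
        have h1 : ((eV w1).symm ⟨w1 b1, Finset.mem_image_of_mem _ hb1M⟩ : Fin n) =
            ⟨rkB w1 b1, rkB_lt w1 hb1M⟩ := rank_eV' w1 hb1M
        have h2 : (⟨w1 b1, Finset.mem_image_of_mem _ hb1M⟩ :
            ((markB w1).image (fun b => w1 b) : Finset (Fin (2*n)))) =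
            eV w1 ⟨rkB w1 b1, rkB_lt w1 hb1M⟩ := by
          rw [← h1, (eV w1).apply_symm_apply]
        have h3 : (⟨rkB w2 b2, rkB_lt w2 hb2M⟩ : Fin n) = ⟨rkB w1 b1, rkB_lt w1 hb1M⟩ := by
          apply Fin.ext; simp [hrk1, hrk2]
        rw [h3, ← h2]
      -- minimality of w at b2 over unmarked positions
      have hminw : ∀ i ∈ unmk w2 k, i ≠ b2 → w b2 < w i := by
        intro i hi hne
        by_cases hiA : i ∈ markA w2
        · set t := (eA w2).symm ⟨i, hiA⟩ with ht
          have hwi : w i = w1 (eA w1 t) := by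
            rw [hw, mixPerm_apply, mixFun_A w1 w2 hiA]
          have hnotC : i ∉ (crossout w2 k).1 := ((mem_unmk w2).mp hi).1
          have hrkA2 : k ≤ rkA w2 i := by
            by_contra hcon
            push_neg at hcon
            exact hnotC ((mem_crossout1_iff w2 k hiA).mpr
              (by rw [min_eq_left hk.le]; exact hcon))
          have hrkt : rkA w2 i = (t : ℕ) := by
            rw [rkA, ht]; exact rank_eA w2 hiA
          have hjA : (eA w1 t : Fin (2*n)) ∈ markA w1 := Finset.coe_mem _
          have hrk1A : rkA w1 (eA w1 t) = (t : ℕ) := rank_eA' w1 t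
          have hju : (eA w1 t : Fin (2*n)) ∈ unmk w1 k := by
            rw [mem_unmk]
            constructor
            · intro hmem
              have := (mem_crossout1_iff w1 k hjA).mp hmem
              rw [min_eq_left hk.le, hrk1A] at this
              omega
            · intro hmem
              exact Finset.disjoint_left.mp (markAB_disjoint w1) hjA
                (crossout_subset_markB w1 k hmem)
          have hjb1 : (eA w1 t : Fin (2*n)) ≠ b1 := by
            intro h
            exact Finset.disjoint_left.mp (markAB_disjoint w1) hjA (h ▸ hb1M)
          have := hmin1 _ hju hjb1
          rw [hvb, hwi]
          exact this
        · have hiB := mem_markB_of_not_markA w2 hiA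
          rw [mix_B_lt w1 w2 hb2M hiB]
          exact hmin2 i hi hne
      -- now compute the step for w
      have huNE : (unmk w k).Nonempty := ⟨b2, huEq ▸ hb2u⟩
      have hminVal : ((unmk w k).image w).min' (huNE.image _) = w b2 := by
        apply le_antisymm
        · exact Finset.min'_le _ _ (Finset.mem_image_of_mem w (huEq ▸ hb2u))
        · apply Finset.le_min'
          intro x hx
          obtain ⟨i, hi, rfl⟩ := Finset.mem_image.mp hx
          rw [huEq] at hi
          rcases eq_or_ne i b2 with rfl | hne
          · exact le_rfl
          · exact (hminw i hi hne).le
      have hbsel : (Equiv.symm w) (((unmk w k).image w).min' (huNE.image _)) = b2 := by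
        rw [hminVal, Equiv.symm_apply_apply]
      have haNE : ((unmk w k).erase ((Equiv.symm w) (((unmk w k).image w).min'
          (huNE.image _)))).Nonempty := by
        rw [hbsel]
        refine ⟨a2, Finset.mem_erase.mpr ⟨hab2, huEq ▸ ha2u⟩⟩
      have haselEq : ((unmk w k).erase ((Equiv.symm w) (((unmk w k).image w).min'
          (huNE.image _)))).min' haNE = a2 := by
        apply le_antisymm
        · apply Finset.min'_le
          rw [hbsel]
          exact Finset.mem_erase.mpr ⟨hab2, huEq ▸ ha2u⟩
        · have hm := Finset.min'_mem ((unmk w k).erase _) haNE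
          obtain ⟨hne, hmem⟩ := Finset.mem_erase.mp hm
          exact hleft2 _ (huEq ▸ hmem) (fun h => hne (h.trans hbsel.symm))
      rw [crossout_succ w, dif_pos huNE]
      dsimp only
      rw [dif_pos haNE, haselEq, hbsel, ih, hco2]
    · rw [crossout_stall (mixPerm w1 w2) k hk, crossout_stall w2 k hk, ih]

lemma mix_markA : markA (mixPerm w1 w2) = markA w2 := by
  rw [markA, markA, mix_crossout]

lemma mix_markB : markB (mixPerm w1 w2) = markB w2 := by
  rw [markB, markB, mix_crossout]

lemma mix_apply_mem {a : Fin (2*n)} (h : a ∈ markA w2) :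
    mixPerm w1 w2 a = w1 (eA w1 ((eA w2).symm ⟨a, h⟩)) := mixFun_A w1 w2 h

lemma coe_symm_eA (w : Equiv.Perm (Fin (2*n))) {a : Fin (2*n)} (h : a ∈ markA w) :
    (eA w ((eA w).symm ⟨a, h⟩) : Fin (2*n)) = a := by
  rw [(eA w).apply_symm_apply]

lemma eA_lt_iff (w : Equiv.Perm (Fin (2*n))) (s t : Fin n) :
    (eA w s : Fin (2*n)) < (eA w t : Fin (2*n)) ↔ s < t := by
  rw [Subtype.coe_lt_coe, (eA w).lt_iff_lt]

lemma mix_pAset : pAset (mixPerm w1 w2) = pAset w1 := by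
  rw [pAset, pAset, mix_markA]
  ext x
  simp only [Finset.mem_image]
  constructor
  · rintro ⟨a, ha, rfl⟩
    refine ⟨(eA w1 ((eA w2).symm ⟨a, ha⟩) : Fin (2*n)), Finset.coe_mem _, ?_⟩
    rw [mix_apply_mem w1 w2 ha]
  · rintro ⟨a1, ha1, rfl⟩
    set t := (eA w1).symm ⟨a1, ha1⟩ with ht
    refine ⟨(eA w2 t : Fin (2*n)), Finset.coe_mem _, ?_⟩
    have hmem : (eA w2 t : Fin (2*n)) ∈ markA w2 := Finset.coe_mem _
    rw [mix_apply_mem w1 w2 hmem]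
    congr 2
    rw [Subtype.coe_eta, (eA w2).symm_apply_apply, ht, (eA w1).apply_symm_apply]

lemma mix_labelA (t : Fin n) :
    labelA (mixPerm w1 w2) (eA w2 t : Fin (2*n)) = labelA w1 (eA w1 t : Fin (2*n)) := by
  rw [labelA, labelA, mix_markA]
  congr 1
  apply Finset.card_bij (fun a' ha' => (eA w1 ((eA w2).symm
    ⟨a', (Finset.mem_filter.mp ha').1⟩) : Fin (2*n)))
  · intro a' ha'
    obtain ⟨haM, hlt, hval⟩ := Finset.mem_filter.mp ha'
    set s := (eA w2).symm ⟨a', haM⟩ with hs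
    refine Finset.mem_filter.mpr ⟨Finset.coe_mem _, ?_, ?_⟩
    · rw [eA_lt_iff]
      rw [← (eA w2).lt_iff_lt, (eA w2).apply_symm_apply]
      rw [← Subtype.coe_lt_coe]
      exact hlt
    · have h1 : mixPerm w1 w2 a' = w1 (eA w1 s) := mix_apply_mem w1 w2 haM
      have h2 : mixPerm w1 w2 (eA w2 t : Fin (2*n)) = w1 (eA w1 ((eA w2).symm
        ⟨(eA w2 t : Fin (2*n)), Finset.coe_mem _⟩)) := mix_apply_mem w1 w2 (Finset.coe_mem _)
      rw [h1, h2] at hval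
      rw [Subtype.coe_eta, (eA w2).symm_apply_apply] at hval
      exact hval
  · intro x hx y hy hxy
    have h1 := (eA w1).injective (Subtype.ext hxy)
    have h2 := (eA w2).symm.injective h1
    exact congrArg Subtype.val h2
  · intro a1 ha1
    obtain ⟨haM, hlt, hval⟩ := Finset.mem_filter.mp ha1
    set s := (eA w1).symm ⟨a1, haM⟩ with hs
    have hmem2 : (eA w2 s : Fin (2*n)) ∈ markA w2 := Finset.coe_mem _
    have hfmem : (eA w2 s : Fin (2*n)) ∈
        (markA w2).filter (fun a' => a' < (eA w2 t : Fin (2*n)) ∧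
          mixPerm w1 w2 (eA w2 t : Fin (2*n)) < mixPerm w1 w2 a') := by
      refine Finset.mem_filter.mpr ⟨hmem2, ?_, ?_⟩
      · rw [eA_lt_iff]
        rw [← (eA w1).lt_iff_lt, hs, (eA w1).apply_symm_apply, ← Subtype.coe_lt_coe]
        exact hlt
      · have h1 : mixPerm w1 w2 (eA w2 s : Fin (2*n)) = w1 (eA w1 ((eA w2).symm
          ⟨(eA w2 s : Fin (2*n)), hmem2⟩)) := mix_apply_mem w1 w2 hmem2
        have h2 : mixPerm w1 w2 (eA w2 t : Fin (2*n)) = w1 (eA w1 ((eA w2).symm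
          ⟨(eA w2 t : Fin (2*n)), Finset.coe_mem _⟩)) := mix_apply_mem w1 w2 (Finset.coe_mem _)
        rw [h1, h2, Subtype.coe_eta, Subtype.coe_eta, (eA w2).symm_apply_apply,
          (eA w2).symm_apply_apply, hs, (eA w1).apply_symm_apply]
        exact hval
    refine ⟨(eA w2 s : Fin (2*n)), hfmem, ?_⟩
    rw [Subtype.coe_eta, (eA w2).symm_apply_apply, hs, (eA w1).apply_symm_apply]

lemma mix_ellSeq : ellSeq (mixPerm w1 w2) = ellSeq w1 := by
  funext r
  rw [ellSeq, ellSeq, mix_markA, mix_pAset]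
  apply Finset.sum_bij (fun a ha => (eA w1 ((eA w2).symm
    ⟨a, (Finset.mem_filter.mp ha).1⟩) : Fin (2*n)))
  · intro a ha
    obtain ⟨haM, hval⟩ := Finset.mem_filter.mp ha
    refine Finset.mem_filter.mpr ⟨Finset.coe_mem _, ?_⟩
    rw [mix_apply_mem w1 w2 haM] at hval
    exact hval
  · intro x hx y hy hxy
    have h1 := (eA w1).injective (Subtype.ext hxy)
    have h2 := (eA w2).symm.injective h1
    exact congrArg Subtype.val h2
  · intro a1 ha1
    obtain ⟨haM, hval⟩ := Finset.mem_filter.mp ha1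
    set s := (eA w1).symm ⟨a1, haM⟩ with hs
    have hmem2 : (eA w2 s : Fin (2*n)) ∈ markA w2 := Finset.coe_mem _
    refine ⟨(eA w2 s : Fin (2*n)), Finset.mem_filter.mpr ⟨hmem2, ?_⟩, ?_⟩
    · rw [mix_apply_mem w1 w2 hmem2, Subtype.coe_eta, (eA w2).symm_apply_apply, hs,
        (eA w1).apply_symm_apply]
      exact hval
    · rw [Subtype.coe_eta, (eA w2).symm_apply_apply, hs, (eA w1).apply_symm_apply]
  · intro a ha
    obtain ⟨haM, hval⟩ := Finset.mem_filter.mp ha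
    set s := (eA w2).symm ⟨a, haM⟩ with hs
    have ha' : a = (eA w2 s : Fin (2*n)) := by
      rw [hs, (eA w2).apply_symm_apply]
    calc labelA (mixPerm w1 w2) a = labelA (mixPerm w1 w2) (eA w2 s : Fin (2*n)) := by
          rw [← ha']
      _ = labelA w1 (eA w1 s : Fin (2*n)) := mix_labelA w1 w2 s
      _ = labelA w1 (eA w1 ((eA w2).symm ⟨a, haM⟩) : Fin (2*n)) := by rw [← hs]

lemma mix_pBset : pBset (mixPerm w1 w2) = pBset w2 := by
  rw [pBset, pBset, mix_markB]

lemma mix_emSeq : emSeq (mixPerm w1 w2) = emSeq w2 := by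
  funext r
  rw [emSeq, emSeq, mix_markB, mix_pBset]
  apply Finset.sum_congr rfl
  intro b hb
  obtain ⟨hbM, hval⟩ := Finset.mem_filter.mp hb
  rw [labelB, labelB, mix_markB]
  have hfeq : (markB w2).filter (fun b' => mixPerm w1 w2 b' < mixPerm w1 w2 b ∧ b < b') =
      (markB w2).filter (fun b' => w2 b' < w2 b ∧ b < b') := by
    apply Finset.filter_congr
    intro b' hb'
    rw [mix_B_lt w1 w2 hb' hbM]
  rw [hfeq]

lemma mix_main : ∃ w : Equiv.Perm (Fin (2*n)), pAset w = pAset w1 ∧ ellSeq w = ellSeq w1 ∧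
    pBset w = pBset w2 ∧ emSeq w = emSeq w2 :=
  ⟨mixPerm w1 w2, mix_pAset w1 w2, mix_ellSeq w1 w2, mix_pBset w1 w2, mix_emSeq w1 w2⟩

end Mix

-- counting lemma
open scoped Classical in
theorem count_indep {S X Y : Type*} [Fintype S] (f : S → X) (g : S → Y)
    (hinj : ∀ w1 w2 : S, f w1 = f w2 → g w1 = g w2 → w1 = w2)
    (hmix : ∀ w1 w2 : S, ∃ w, f w = f w1 ∧ g w = g w2) (x : X) (y : Y) :
    (Finset.univ.filter (fun w => f w = x ∧ g w = y)).card * Fintype.card S =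
    (Finset.univ.filter (fun w => f w = x)).card *
    (Finset.univ.filter (fun w => g w = y)).card := by
  by_cases hx : ∃ w1 : S, f w1 = x
  · by_cases hy : ∃ w2 : S, g w2 = y
    · obtain ⟨w1, hw1⟩ := hx
      obtain ⟨w2, hw2⟩ := hy
      set γ : S → S → S := fun u v => (hmix u v).choose with hγ
      have hγ1 : ∀ u v, f (γ u v) = f u := fun u v => (hmix u v).choose_spec.1
      have hγ2 : ∀ u v, g (γ u v) = g v := fun u v => (hmix u v).choose_spec.2
      have hjoint : (Finset.univ.filter (fun w => f w = x ∧ g w = y)) = {γ w1 w2} := by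
        ext s
        simp only [mem_filter, mem_univ, true_and, mem_singleton]
        constructor
        · rintro ⟨h1, h2⟩
          exact hinj s _ (by rw [h1, hγ1, hw1]) (by rw [h2, hγ2, hw2])
        · rintro rfl
          exact ⟨by rw [hγ1, hw1], by rw [hγ2, hw2]⟩
      rw [hjoint, card_singleton, one_mul]
      have key : ((Finset.univ.filter (fun w => f w = x)) ×ˢ
          (Finset.univ.filter (fun w => g w = y))).card = Fintype.card S := by
        rw [← Finset.card_univ]
        apply Finset.card_nbij' (fun p => γ p.2 p.1) (fun s => (γ w1 s, γ s w2))
        · intro p _; exact mem_univ _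
        · intro s _
          simp only [mem_coe, mem_product, mem_filter, mem_univ, true_and]
          exact ⟨by rw [hγ1, hw1], by rw [hγ2, hw2]⟩
        · rintro ⟨u, v⟩ hp
          simp only [mem_coe, mem_product, mem_filter, mem_univ, true_and] at hp
          have h1 : γ w1 (γ v u) = u :=
            hinj _ _ (by rw [hγ1, hw1, hp.1]) (by rw [hγ2, hγ2])
          have h2 : γ (γ v u) w2 = v :=
            hinj _ _ (by rw [hγ1, hγ1]) (by rw [hγ2, hw2, hp.2])
          simp [h1, h2]
        · intro s _
          exact hinj _ _ (by rw [hγ1, hγ1]) (by rw [hγ2, hγ2])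
      rw [← key, Finset.card_product, mul_comm]
    · push_neg at hy
      have h1 : (Finset.univ.filter (fun w => g w = y)) = ∅ := by
        ext s; simp [hy s]
      have h2 : (Finset.univ.filter (fun w => f w = x ∧ g w = y)) = ∅ := by
        ext s; simp; intro _; exact hy s
      rw [h1, h2]; simp
  · push_neg at hx
    have h1 : (Finset.univ.filter (fun w => f w = x)) = ∅ := by
      ext s; simp [hx s]
    have h2 : (Finset.univ.filter (fun w => f w = x ∧ g w = y)) = ∅ := by
      ext s; simp; intro h; exact absurd h (hx s)
    rw [h1, h2]; simp


open scoped Classical in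
/-- for a uniformly random permutation `w` of `{1,…,2n}`, the labeled pair
`(p_A(w), ℓ(w))` is independent of the labeled pair `(p_B(w), m(w))`:  expressed by
cross-multiplying the defining identity `P(X ∧ Y) = P(X) P(Y)`. -/
theorem stmt11 (n : ℕ) (α β : Finset ℕ) (ℓ₀ m₀ : ℕ → ℕ) :
    (Finset.univ.filter (fun w : Equiv.Perm (Fin (2 * n)) =>
        (pAset w = α ∧ ellSeq w = ℓ₀) ∧ (pBset w = β ∧ emSeq w = m₀))).card *
      Fintype.card (Equiv.Perm (Fin (2 * n))) =
    (Finset.univ.filter (fun w : Equiv.Perm (Fin (2 * n)) =>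
        pAset w = α ∧ ellSeq w = ℓ₀)).card *
    (Finset.univ.filter (fun w : Equiv.Perm (Fin (2 * n)) =>
        pBset w = β ∧ emSeq w = m₀)).card := by
  have h := count_indep (S := Equiv.Perm (Fin (2*n)))
    (fun w => (pAset w, ellSeq w)) (fun w => (pBset w, emSeq w))
    (fun u v hf hg => inj_main u v (congrArg Prod.fst hf) (congrArg Prod.snd hf)
      (congrArg Prod.fst hg) (congrArg Prod.snd hg))
    (fun u v => by
      obtain ⟨w, h1, h2, h3, h4⟩ := mix_main u v
      exact ⟨w, by rw [h1, h2], by rw [h3, h4]⟩)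
    (α, ℓ₀) (β, m₀)
  have e1 : (Finset.univ.filter (fun w : Equiv.Perm (Fin (2 * n)) =>
      (pAset w = α ∧ ellSeq w = ℓ₀) ∧ (pBset w = β ∧ emSeq w = m₀))) =
      (Finset.univ.filter (fun w : Equiv.Perm (Fin (2 * n)) =>
      (pAset w, ellSeq w) = (α, ℓ₀) ∧ (pBset w, emSeq w) = (β, m₀))) := by
    ext w
    simp only [Finset.mem_filter, Finset.mem_univ, true_and, Prod.mk.injEq]
  have e2 : (Finset.univ.filter (fun w : Equiv.Perm (Fin (2 * n)) =>
      pAset w = α ∧ ellSeq w = ℓ₀)) =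
      (Finset.univ.filter (fun w : Equiv.Perm (Fin (2 * n)) =>
      (pAset w, ellSeq w) = (α, ℓ₀))) := by
    ext w
    simp only [Finset.mem_filter, Finset.mem_univ, true_and, Prod.mk.injEq]
  have e3 : (Finset.univ.filter (fun w : Equiv.Perm (Fin (2 * n)) =>
      pBset w = β ∧ emSeq w = m₀)) =
      (Finset.univ.filter (fun w : Equiv.Perm (Fin (2 * n)) =>
      (pBset w, emSeq w) = (β, m₀))) := by
    ext w
    simp only [Finset.mem_filter, Finset.mem_univ, true_and, Prod.mk.injEq]
  rw [e1, e2, e3]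
  have finst : ∀ {γ : Type} {p : γ → Prop} (i1 i2 : DecidablePred p) (s : Finset γ),
      @Finset.filter _ p i1 s = @Finset.filter _ p i2 s := by
    intro γ p i1 i2 s
    congr
  convert h using 2 <;> exact congrArg Finset.card (finst _ _ _)
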